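/- Let X be a topological vector space over ℝ and let f : X → ℝ be an additive function. If f is bounded above on some nonempty open subset U of X (i.e., sup f[U] < ∞), then f is continuous. -/

import Mathlib

open Set Filter Topology Pointwise

/-- An additive functional on a topological vector space over `ℝ` that is bounded above on
some nonempty open set is continuous. -/
theorem statement6 {X : Type*} [TopologicalSpace X] [AddCommGroup X] [Module ℝ X]
    [IsTopologicalAddGroup X] [ContinuousSMul ℝ X]
    (f : X → ℝ) (hadd : ∀ x y : X, f (x + y) = f x + f y)
    (U : Set X) (hU : IsOpen U) (hne : U.Nonempty) (hbdd : BddAbove (f '' U)) :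
    Continuous f := by
  set F : X →+ ℝ := AddMonoidHom.mk' f (fun x y => hadd x y) with hF
  obtain ⟨x₀, hx₀⟩ := hne
  obtain ⟨M, hM⟩ := hbdd
  -- V is a neighborhood of 0 where f ≤ C := M - f x₀
  set V : Set X := (fun y => y - x₀) '' U with hV
  have hVnhds : V ∈ 𝓝 (0 : X) := by
    have : IsOpen V := by
      have := (Homeomorph.subRight x₀).isOpenMap U hU
      simpa [hV] using this
    exact this.mem_nhds ⟨x₀, hx₀, by simp⟩
  have hVle : ∀ x ∈ V, f x ≤ M - f x₀ := by
    rintro x ⟨u, hu, rfl⟩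
    have : f (u - x₀) = f u - f x₀ := F.map_sub u x₀
    rw [this]
    have := hM ⟨u, hu, rfl⟩
    linarith
  set C := M - f x₀ with hC
  -- W symmetric neighborhood of 0 with |f| ≤ C on W
  set W : Set X := V ∩ (-V) with hW
  have hWnhds : W ∈ 𝓝 (0 : X) := by
    refine inter_mem hVnhds ?_
    simpa using neg_mem_nhds_zero X hVnhds
  have hWabs : ∀ x ∈ W, |f x| ≤ C := by
    rintro x ⟨h1, h2⟩
    have hneg : f (-x) ≤ C := hVle _ (by simpa using h2)
    have : -f x ≤ C := by simpa using (F.map_neg x) ▸ hneg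
    exact abs_le.2 ⟨by linarith, hVle _ h1⟩
  have hf0 : f 0 = 0 := F.map_zero
  -- continuity at 0
  have hcont0 : ContinuousAt f 0 := by
    rw [ContinuousAt, hf0, Metric.tendsto_nhds]
    intro ε hε
    obtain ⟨n, hn⟩ := exists_nat_gt (C / ε)
    have hn0 : 0 < (n : ℝ) + 1 := by positivity
    have hCn : C < ((n : ℝ) + 1) * ε := by
      have : C / ε < (n : ℝ) + 1 := lt_of_le_of_lt (le_of_lt hn) (by linarith)
      calc C = (C / ε) * ε := by field_simp
        _ < ((n : ℝ) + 1) * ε := by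
            exact mul_lt_mul_of_pos_right this hε
    have hmem : (((n : ℝ) + 1)⁻¹) • W ∈ 𝓝 (0 : X) := by
      rw [set_smul_mem_nhds_zero_iff (inv_ne_zero hn0.ne')]
      exact hWnhds
    filter_upwards [hmem] with x hx
    obtain ⟨w, hw, rfl⟩ := hx
    have hfw : f ((((n : ℝ) + 1)⁻¹) • w) = (((n : ℝ) + 1)⁻¹) * f w := by
      have : (((n : ℝ) + 1)) • ((((n : ℝ) + 1)⁻¹) • w) = w := by
        rw [smul_smul]; field_simp; exact one_smul ℝ w
      have h2 : f ((n + 1 : ℕ) • ((((n : ℝ) + 1)⁻¹) • w)) = (n + 1 : ℕ) * f ((((n : ℝ) + 1)⁻¹) • w) := by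
        have := F.map_nsmul (n + 1) ((((n : ℝ) + 1)⁻¹) • w)
        rw [nsmul_eq_mul] at this
        exact this
      have h3 : ((n + 1 : ℕ) : ℝ) • ((((n : ℝ) + 1)⁻¹) • w) = w := by
        push_cast; exact this
      rw [← Nat.cast_smul_eq_nsmul ℝ] at h2
      rw [h3] at h2
      push_cast at h2
      field_simp at h2 ⊢
      linarith
    rw [Real.dist_eq, sub_zero, hfw, abs_mul, abs_inv, abs_of_pos hn0]
    calc ((n : ℝ) + 1)⁻¹ * |f w| ≤ ((n : ℝ) + 1)⁻¹ * C := by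
          have := hWabs w hw
          have hC0 : 0 ≤ |f w| := abs_nonneg _
          exact mul_le_mul_of_nonneg_left this (by positivity)
      _ < ε := by
          rw [inv_mul_lt_iff₀ hn0]
          linarith
  exact continuous_of_continuousAt_zero F hcont0
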